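/- Let d ≥ 1 be an integer, α ∈ (0,1), m > max(0,(d-2)/d), and b := α/(2+d(m-1)) > 0. Then for every η ∈ (0,1) one has ∫_η^1 ( ((1-α)/b) · (∫_{η/σ}^1 τ^{1-d} dτ) + 1 ) · σ^{1+1/b-d} · (1-σ^{1/b})^{-α} dσ = ∫_η^1 (1-σ^{1/b})^{-α} σ^{1-d} dσ. -/

import Mathlib

open MeasureTheory Set

/-- simplification of the kernel profile written with the truncated
Newtonian potential `H_d(s) = ∫_s^1 τ^{1-d} dτ` to a single explicit integral. -/
theorem kernel_simplification (d : ℕ) (hd : 1 ≤ d) (α m b : ℝ)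
    (hα : α ∈ Set.Ioo (0:ℝ) 1)
    (hm : m > max 0 (((d:ℝ) - 2) / d))
    (hb : b = α / (2 + (d:ℝ) * (m - 1))) :
    ∀ η ∈ Set.Ioo (0:ℝ) 1,
      (∫ σ in Set.Ioo η 1,
          (((1 - α) / b) * (∫ τ in Set.Ioo (η / σ) 1, τ ^ (1 - (d:ℝ))) + 1)
            * σ ^ (1 + 1 / b - (d:ℝ)) * (1 - σ ^ (1 / b)) ^ (-α))
        = ∫ σ in Set.Ioo η 1, (1 - σ ^ (1 / b)) ^ (-α) * σ ^ (1 - (d:ℝ)) := by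
  intro η hη
  obtain ⟨hη0, hη1⟩ := hη
  have hα0 : (0:ℝ) < α := hα.1
  have hα1 : α < 1 := hα.2
  have hd0 : (0:ℝ) < (d:ℝ) := by
    have : 0 < d := hd
    exact_mod_cast this
  have hden : (0:ℝ) < 2 + (d:ℝ) * (m - 1) := by
    have h1 : ((d:ℝ) - 2) / d < m := lt_of_le_of_lt (le_max_right _ _) hm
    have h2 : (d:ℝ) - 2 < m * d := (div_lt_iff₀ hd0).mp h1
    nlinarith
  have hb0 : (0:ℝ) < b := by rw [hb]; exact div_pos hα0 hden
  have hbne : b ≠ 0 := ne_of_gt hb0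
  set c : ℝ := 1 / b with hc_def
  have hc0 : (0:ℝ) < c := by positivity
  have h1α : (0:ℝ) < 1 - α := by linarith
  set u0 : ℝ → ℝ := fun σ => (1 - σ ^ c) ^ (-α) with hu0_def
  set w : ℝ → ℝ := fun σ => -(1 - σ ^ c) ^ (1 - α) with hw_def
  set A : ℝ → ℝ := fun σ => ∫ ρ in η..σ, ρ ^ (1 - (d:ℝ)) with hA_def
  set w' : ℝ → ℝ := fun σ => (1 - α) / b * σ ^ (c - 1) * u0 σ with hw'_def
  set D : ℝ → ℝ := fun σ => σ ^ (1 - (d:ℝ)) * w σ + A σ * w' σ with hD_def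
  have hIccpos : ∀ σ ∈ Icc η 1, (0:ℝ) < σ := fun σ hσ => lt_of_lt_of_le hη0 hσ.1
  have hrp : ∀ p : ℝ, ContinuousOn (fun σ : ℝ => σ ^ p) (Icc η 1) := fun p σ hσ =>
    (Real.continuousAt_rpow_const σ p (Or.inl (hIccpos σ hσ).ne')).continuousWithinAt
  -- derivative of A
  have hA' : ∀ σ ∈ Icc η 1, HasDerivAt A (σ ^ (1 - (d:ℝ))) σ := by
    intro σ hσ
    have hσ0 : (0:ℝ) < σ := hIccpos σ hσ
    have hcont : ContinuousOn (fun x : ℝ => x ^ (1 - (d:ℝ))) (Ioi 0) := fun x hx =>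
      (Real.continuousAt_rpow_const x _ (Or.inl (ne_of_gt hx))).continuousWithinAt
    refine intervalIntegral.integral_hasDerivAt_right ?_ ?_ ?_
    · apply ContinuousOn.intervalIntegrable
      intro x hx
      have hx0 : 0 < x := by
        rcases le_total η σ with h | h
        · rw [uIcc_of_le h] at hx; exact lt_of_lt_of_le hη0 hx.1
        · rw [uIcc_of_ge h] at hx; exact lt_of_lt_of_le hσ0 hx.1
      exact (Real.continuousAt_rpow_const x _ (Or.inl hx0.ne')).continuousWithinAt
    · exact ContinuousOn.stronglyMeasurableAtFilter isOpen_Ioi hcont σ hσ0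
    · exact Real.continuousAt_rpow_const σ _ (Or.inl hσ0.ne')
  have hAc : ContinuousOn A (Icc η 1) := fun σ hσ =>
    (hA' σ hσ).continuousAt.continuousWithinAt
  -- derivative of w on the open interval
  have hwD : ∀ σ ∈ Ioo η 1, HasDerivAt w (w' σ) σ := by
    intro σ hσ
    have hσ0 : (0:ℝ) < σ := lt_trans hη0 hσ.1
    have hσ1 : σ < 1 := hσ.2
    have hxc : σ ^ c < 1 := Real.rpow_lt_one hσ0.le hσ1 hc0
    have hpos : (0:ℝ) < 1 - σ ^ c := by linarith
    have h1 : HasDerivAt (fun s : ℝ => 1 - s ^ c) (-(c * σ ^ (c - 1))) σ :=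
      (Real.hasDerivAt_rpow_const (Or.inl hσ0.ne')).const_sub 1
    have h2 : HasDerivAt (fun y : ℝ => y ^ (1 - α))
        ((1 - α) * (1 - σ ^ c) ^ (1 - α - 1)) (1 - σ ^ c) :=
      Real.hasDerivAt_rpow_const (Or.inl hpos.ne')
    have h3 : HasDerivAt w
        (-((1 - α) * (1 - σ ^ c) ^ (1 - α - 1) * -(c * σ ^ (c - 1)))) σ :=
      by have := (h2.comp σ h1).neg; exact this
    convert h3 using 1
    have e : (1 - α - 1 : ℝ) = -α := by ring
    rw [e]
    have hcb : (1 - α) / b = (1 - α) * c := by rw [hc_def]; ring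
    simp only [hw'_def, hu0_def]
    linear_combination (σ ^ (c - 1) * (1 - σ ^ c) ^ (-α)) * hcb
  -- continuity of w on the closed interval
  have hwc : ContinuousOn w (Icc η 1) := by
    have hin : ContinuousOn (fun s : ℝ => 1 - s ^ c) (Icc η 1) :=
      continuousOn_const.sub (hrp c)
    have hout : Continuous (fun y : ℝ => y ^ (1 - α)) := by
      rw [continuous_iff_continuousAt]
      intro y
      exact Real.continuousAt_rpow_const y _ (Or.inr h1α.le)
    exact (hout.comp_continuousOn hin).neg
  -- integrability of w'
  have hw'nonneg : ∀ σ ∈ Ioo η 1, 0 ≤ w' σ := by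
    intro σ hσ
    have hσ0 : (0:ℝ) < σ := lt_trans hη0 hσ.1
    have hxc : σ ^ c < 1 := Real.rpow_lt_one hσ0.le hσ.2 hc0
    have hb1 : (0:ℝ) ≤ 1 - σ ^ c := by linarith
    rw [hw'_def, hu0_def]
    have h1 : (0:ℝ) ≤ (1 - α) / b := by positivity
    have h2 : (0:ℝ) ≤ σ ^ (c - 1) := Real.rpow_nonneg hσ0.le _
    have h3 : (0:ℝ) ≤ (1 - σ ^ c) ^ (-α) := Real.rpow_nonneg hb1 _
    exact mul_nonneg (mul_nonneg h1 h2) h3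
  have hw'int : IntegrableOn w' (Ioo η 1) :=
    (intervalIntegral.integrableOn_deriv_of_nonneg hwc hwD hw'nonneg).mono_set
      Ioo_subset_Ioc_self
  -- products of continuous functions with w' are integrable
  have hmulint : ∀ g : ℝ → ℝ, ContinuousOn g (Icc η 1) →
      IntegrableOn (fun σ => g σ * w' σ) (Ioo η 1) := fun g hg =>
    hw'int.continuousOn_mul_of_subset hg isCompact_Icc measurableSet_Ioo Ioo_subset_Icc_self
  -- integrability of the RHS integrand
  have hr_int : IntegrableOn (fun σ => (1 - σ ^ c) ^ (-α) * σ ^ (1 - (d:ℝ))) (Ioo η 1) := by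
    have hg : ContinuousOn (fun σ : ℝ => b / (1 - α) * σ ^ (1 - (d:ℝ)) * σ ^ (1 - c))
        (Icc η 1) := (continuousOn_const.mul (hrp _)).mul (hrp _)
    refine (hmulint _ hg).congr_fun ?_ measurableSet_Ioo
    intro σ hσ
    have hσ0 : (0:ℝ) < σ := lt_trans hη0 hσ.1
    have e1 : σ ^ (1 - c) * σ ^ (c - 1) = 1 := by
      rw [← Real.rpow_add hσ0]
      norm_num
    have e2 : b / (1 - α) * ((1 - α) / b) = 1 := by field_simp
    simp only [hw'_def, hu0_def]
    linear_combination (σ ^ (1 - (d:ℝ)) * (1 - σ ^ c) ^ (-α) * (b / (1 - α)) * ((1 - α) / b)) * e1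
      + (σ ^ (1 - (d:ℝ)) * (1 - σ ^ c) ^ (-α)) * e2
  -- integrability of D
  have hD_int : IntegrableOn D (Ioo η 1) := by
    have h1 : IntegrableOn (fun σ => σ ^ (1 - (d:ℝ)) * w σ) (Ioo η 1) :=
      (((hrp _).mul hwc).integrableOn_Icc).mono_set Ioo_subset_Icc_self
    exact h1.add (hmulint A hAc)
  -- the integral of D vanishes
  have hD_zero : ∫ σ in Ioo η 1, D σ = 0 := by
    have hDint' : IntervalIntegrable D volume η 1 := by
      rw [intervalIntegrable_iff_integrableOn_Ioo_of_le hη1.le]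
      exact hD_int
    have hPd : ∀ σ ∈ Ioo η 1, HasDerivAt (fun s => A s * w s) (D σ) σ := fun σ hσ =>
      (hA' σ (Ioo_subset_Icc_self hσ)).mul (hwD σ hσ)
    have hftc := intervalIntegral.integral_eq_sub_of_hasDerivAt_of_le hη1.le
      (hAc.mul hwc) hPd hDint'
    have hw1 : w 1 = 0 := by
      rw [hw_def]
      simp [Real.one_rpow, Real.zero_rpow (ne_of_gt h1α)]
    have hAη : A η = 0 := by simp [hA_def]
    rw [← MeasureTheory.integral_Ioc_eq_integral_Ioo, ← intervalIntegral.integral_of_le hη1.le,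
      hftc]
    simp [hw1, hAη]
  -- key pointwise identity
  have key : ∀ σ ∈ Ioo η 1,
      (((1 - α) / b) * (∫ τ in Set.Ioo (η / σ) 1, τ ^ (1 - (d:ℝ))) + 1)
        * σ ^ (1 + c - (d:ℝ)) * (1 - σ ^ c) ^ (-α)
      = (1 - σ ^ c) ^ (-α) * σ ^ (1 - (d:ℝ)) + D σ := by
    intro σ hσ
    have hσ0 : (0:ℝ) < σ := lt_trans hη0 hσ.1
    have hσ1 : σ < 1 := hσ.2
    have hησ : η < σ := hσ.1
    have hxc : σ ^ c < 1 := Real.rpow_lt_one hσ0.le hσ1 hc0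
    have hpos : (0:ℝ) < 1 - σ ^ c := by linarith
    -- change of variables for the inner integral
    have hG : (∫ τ in Set.Ioo (η / σ) 1, τ ^ (1 - (d:ℝ))) = σ ^ ((d:ℝ) - 2) * A σ := by
      have h01 : η / σ < 1 := (div_lt_one hσ0).mpr hησ
      have e1 : (∫ τ in Set.Ioo (η / σ) 1, τ ^ (1 - (d:ℝ)))
          = ∫ τ in (η / σ)..1, τ ^ (1 - (d:ℝ)) := by
        rw [intervalIntegral.integral_of_le h01.le, MeasureTheory.integral_Ioc_eq_integral_Ioo]
      have e2 := intervalIntegral.integral_comp_div (a := η) (b := σ)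
        (f := fun τ : ℝ => τ ^ (1 - (d:ℝ))) (ne_of_gt hσ0)
      simp only [div_self (ne_of_gt hσ0), smul_eq_mul] at e2
      have e3 : (∫ x in η..σ, ((x:ℝ) / σ) ^ (1 - (d:ℝ)))
          = ∫ x in η..σ, x ^ (1 - (d:ℝ)) * σ ^ ((d:ℝ) - 1) := by
        apply intervalIntegral.integral_congr
        intro x hx
        rw [uIcc_of_le hησ.le] at hx
        have hx0 : (0:ℝ) < x := lt_of_lt_of_le hη0 hx.1
        show (x / σ) ^ (1 - (d:ℝ)) = x ^ (1 - (d:ℝ)) * σ ^ ((d:ℝ) - 1)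
        rw [Real.div_rpow hx0.le hσ0.le, div_eq_mul_inv, ← Real.rpow_neg hσ0.le,
          show -(1 - (d:ℝ)) = (d:ℝ) - 1 by ring]
      have e4 : (∫ x in η..σ, x ^ (1 - (d:ℝ)) * σ ^ ((d:ℝ) - 1)) = A σ * σ ^ ((d:ℝ) - 1) :=
        intervalIntegral.integral_mul_const _ _
      rw [e3, e4] at e2
      have e5 : σ⁻¹ * σ ^ ((d:ℝ) - 1) = σ ^ ((d:ℝ) - 2) := by
        rw [← Real.rpow_neg_one σ, ← Real.rpow_add hσ0,
          show (-1 + ((d:ℝ) - 1)) = (d:ℝ) - 2 by ring]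
      have e6 : (∫ x in (η / σ)..1, x ^ (1 - (d:ℝ))) = σ⁻¹ * (A σ * σ ^ ((d:ℝ) - 1)) := by
        rw [e2]
        field_simp
      rw [e1, e6, ← e5]
      ring
    rw [hG]
    have hsplit : σ ^ (1 + c - (d:ℝ)) = σ ^ c * σ ^ (1 - (d:ℝ)) := by
      rw [← Real.rpow_add hσ0]
      congr 1
      ring
    have hmix : σ ^ ((d:ℝ) - 2) * (σ ^ c * σ ^ (1 - (d:ℝ))) = σ ^ (c - 1) := by
      rw [← Real.rpow_add hσ0, ← Real.rpow_add hσ0]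
      congr 1
      ring
    have hpow1 : (1 - σ ^ c) ^ (1 - α) = (1 - σ ^ c) ^ (-α) * (1 - σ ^ c) := by
      rw [show (1 - α : ℝ) = -α + 1 by ring, Real.rpow_add hpos, Real.rpow_one]
    simp only [hD_def, hw_def, hw'_def, hu0_def]
    rw [hsplit, hpow1]
    linear_combination ((1 - α) / b * A σ * (1 - σ ^ c) ^ (-α)) * hmix
  -- assemble
  have hsum : (∫ σ in Ioo η 1, ((1 - σ ^ c) ^ (-α) * σ ^ (1 - (d:ℝ)) + D σ))
      = (∫ σ in Ioo η 1, (1 - σ ^ c) ^ (-α) * σ ^ (1 - (d:ℝ))) + ∫ σ in Ioo η 1, D σ :=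
    integral_add hr_int hD_int
  rw [setIntegral_congr_fun measurableSet_Ioo (fun σ hσ => key σ hσ), hsum, hD_zero, add_zero]
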